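/- Let Ω ⊂ ℝ² be a bounded open convex set with in-radius R_in. Then ℓ(Ω) ≤ 3·R_in, where ℓ(Ω) = inf over rotations of the vertical width of the rotated domain. Combined with the lower bound, 2·R_in ≤ ℓ(Ω) ≤ 3·R_in. -/

import Mathlib

open Metric
open Metric

noncomputable section

/-- Rotation of the plane by angle `θ` around the point `x₀`. -/
def rot (x₀ : EuclideanSpace ℝ (Fin 2)) (θ : ℝ) (x : EuclideanSpace ℝ (Fin 2)) :
    EuclideanSpace ℝ (Fin 2) :=
  (EuclideanSpace.equiv (Fin 2) ℝ).symm
    ![x₀ 0 + Real.cos θ * (x 0 - x₀ 0) - Real.sin θ * (x 1 - x₀ 1),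
      x₀ 1 + Real.sin θ * (x 0 - x₀ 0) + Real.cos θ * (x 1 - x₀ 1)]

/-- `ℓ(Ω, x₀, θ)`: the vertical (second-coordinate) width of the rotated set `R(x₀,θ)Ω`. -/
def width (Ω : Set (EuclideanSpace ℝ (Fin 2))) (x₀ : EuclideanSpace ℝ (Fin 2)) (θ : ℝ) : ℝ :=
  sSup ((fun x => x 1) '' (rot x₀ θ '' Ω)) - sInf ((fun x => x 1) '' (rot x₀ θ '' Ω))

/-- The in-radius `R_in = sup_{x ∈ Ω} dist(x, ∂Ω)`, expressed via the distance to `Ωᶜ`. -/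
def inRadius (Ω : Set (EuclideanSpace ℝ (Fin 2))) : ℝ :=
  sSup ((fun x => infDist x Ωᶜ) '' Ω)


/-- `ℓ(Ω) = inf_{θ ∈ [0,2π)} ℓ(Ω, x₀, θ)` (independent of `x₀`). -/
def minWidth (Ω : Set (EuclideanSpace ℝ (Fin 2))) (x₀ : EuclideanSpace ℝ (Fin 2)) : ℝ :=
  sInf ((fun θ => width Ω x₀ θ) '' Set.Ico 0 (2 * Real.pi))

local notation "⟪" x ", " y "⟫_ℝ" => @inner ℝ _ _ x y

noncomputable section

local notation "E2" => EuclideanSpace ℝ (Fin 2)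

def supf (Ω : Set E2) (u : E2) : ℝ := sSup ((fun x => ⟪u, x⟫_ℝ) '' Ω)

variable {Ω : Set E2}

lemma bddAbove_supf (hbdd : Bornology.IsBounded Ω) (u : E2) :
    BddAbove ((fun x => ⟪u, x⟫_ℝ) '' Ω) := by
  obtain ⟨M, hM⟩ := hbdd.subset_closedBall 0
  refine ⟨‖u‖ * M, ?_⟩
  rintro - ⟨x, hx, rfl⟩
  have h1 : ‖x‖ ≤ M := by simpa using hM hx
  calc ⟪u, x⟫_ℝ ≤ ‖u‖ * ‖x‖ := real_inner_le_norm u x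
    _ ≤ ‖u‖ * M := by nlinarith [norm_nonneg u, norm_nonneg x]

lemma le_supf (hbdd : Bornology.IsBounded Ω) {x : E2} (hx : x ∈ Ω) (u : E2) :
    ⟪u, x⟫_ℝ ≤ supf Ω u :=
  le_csSup (bddAbove_supf hbdd u) ⟨x, hx, rfl⟩

lemma supf_le (hne : Ω.Nonempty) {u : E2} {a : ℝ} (h : ∀ x ∈ Ω, ⟪u, x⟫_ℝ ≤ a) :
    supf Ω u ≤ a :=
  csSup_le (hne.image _) (by rintro - ⟨x, hx, rfl⟩; exact h x hx)

lemma supf_sum_le (hbdd : Bornology.IsBounded Ω) (hne : Ω.Nonempty)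
    (T : Finset E2) (w : E2 → ℝ) (hw : ∀ y ∈ T, 0 ≤ w y) :
    supf Ω (∑ y ∈ T, w y • y) ≤ ∑ y ∈ T, w y * supf Ω y := by
  refine supf_le hne (fun x hx => ?_)
  rw [sum_inner]
  refine Finset.sum_le_sum (fun y hy => ?_)
  rw [real_inner_smul_left]
  exact mul_le_mul_of_nonneg_left (le_supf hbdd hx y) (hw y hy)

lemma supf_smul_le (hbdd : Bornology.IsBounded Ω) (hne : Ω.Nonempty)
    {t : ℝ} (ht : 0 ≤ t) (u : E2) : supf Ω (t • u) ≤ t * supf Ω u := by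
  refine supf_le hne (fun x hx => ?_)
  rw [real_inner_smul_left]
  exact mul_le_mul_of_nonneg_left (le_supf hbdd hx u) ht

lemma supf_smul (hbdd : Bornology.IsBounded Ω) (hne : Ω.Nonempty)
    {t : ℝ} (ht : 0 < t) (u : E2) : supf Ω (t • u) = t * supf Ω u := by
  refine le_antisymm (supf_smul_le hbdd hne ht.le u) ?_
  have h2 : supf Ω u ≤ t⁻¹ * supf Ω (t • u) := by
    have := supf_smul_le hbdd hne (t := t⁻¹) (by positivity) (t • u)
    rwa [smul_smul, inv_mul_cancel₀ ht.ne', one_smul] at this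
  calc t * supf Ω u ≤ t * (t⁻¹ * supf Ω (t • u)) :=
        mul_le_mul_of_nonneg_left h2 ht.le
    _ = supf Ω (t • u) := by field_simp

lemma continuous_supf (hbdd : Bornology.IsBounded Ω) (hne : Ω.Nonempty) :
    Continuous (supf Ω) := by
  obtain ⟨M, hM0, hM⟩ : ∃ M, 0 ≤ M ∧ Ω ⊆ closedBall 0 M := by
    obtain ⟨M, hM⟩ := hbdd.subset_closedBall 0
    exact ⟨max M 0, le_max_right _ _,
      hM.trans (closedBall_subset_closedBall (le_max_left _ _))⟩
  have key : ∀ u v : E2, supf Ω u - supf Ω v ≤ M * ‖u - v‖ := by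
    intro u v
    rw [sub_le_iff_le_add]
    refine supf_le hne (fun x hx => ?_)
    have hx' : ‖x‖ ≤ M := by simpa using hM hx
    have h1 : ⟪u, x⟫_ℝ = ⟪v, x⟫_ℝ + ⟪u - v, x⟫_ℝ := by
      rw [← inner_add_left, add_sub_cancel]
    have h2 : ⟪u - v, x⟫_ℝ ≤ ‖u - v‖ * ‖x‖ := real_inner_le_norm _ _
    have h3 := le_supf hbdd hx v
    nlinarith [norm_nonneg (u - v)]
  have : LipschitzWith (Real.toNNReal M) (supf Ω) := by
    refine LipschitzWith.of_dist_le_mul (fun u v => ?_)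
    rw [Real.dist_eq, abs_sub_le_iff, dist_eq_norm]
    rw [Real.coe_toNNReal M hM0]
    refine ⟨key u v, ?_⟩
    have := key v u
    rwa [norm_sub_rev] at this
  exact this.continuous


lemma compl_nonempty (hbdd : Bornology.IsBounded Ω) : Ωᶜ.Nonempty := by
  obtain ⟨M, hM0, hM⟩ : ∃ M, 0 ≤ M ∧ Ω ⊆ closedBall 0 M := by
    obtain ⟨M, hM⟩ := hbdd.subset_closedBall 0
    exact ⟨max M 0, le_max_right _ _,
      hM.trans (closedBall_subset_closedBall (le_max_left _ _))⟩
  refine ⟨EuclideanSpace.single 0 (M + 1), fun h => ?_⟩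
  have := hM h
  simp only [mem_closedBall, dist_zero_right, EuclideanSpace.norm_single] at this
  rw [Real.norm_eq_abs, abs_of_nonneg (by linarith)] at this
  linarith

/-- Easy direction: the inradius at `c` is at most the distance from `c` to any
supporting halfplane. -/
lemma infDist_le_gap (hbdd : Bornology.IsBounded Ω) {c : E2} (hc : c ∈ Ω)
    {u : E2} (hu : ‖u‖ = 1) : infDist c Ωᶜ ≤ supf Ω u - ⟪c, u⟫_ℝ := by
  have hs : 0 ≤ supf Ω u - ⟪c, u⟫_ℝ := by
    have := le_supf hbdd hc u
    rw [real_inner_comm]; linarith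
  set s := supf Ω u - ⟪c, u⟫_ℝ with hsdef
  refine le_of_forall_pos_le_add (fun ε hε => ?_)
  have hq : c + (s + ε) • u ∉ Ω := by
    intro h
    have h2 := le_supf hbdd h u
    rw [inner_add_right, real_inner_smul_right, real_inner_self_eq_norm_sq, hu,
      real_inner_comm] at h2
    simp only [one_pow, mul_one] at h2
    rw [hsdef] at h2; linarith
  calc infDist c Ωᶜ ≤ dist c (c + (s + ε) • u) := infDist_le_dist_of_mem hq
    _ = s + ε := by
        rw [dist_eq_norm]
        simp [norm_smul, hu, abs_of_nonneg (by linarith : (0:ℝ) ≤ s + ε)]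

/-- Converse direction: if all supporting halfplanes are at distance `≥ ρ` from `c`,
then the ball of radius `ρ` around `c` is inside `Ω`. -/
lemma gap_le_infDist (hΩ : IsOpen Ω) (hconv : Convex ℝ Ω) (hbdd : Bornology.IsBounded Ω)
    (hne : Ω.Nonempty) {c : E2} {ρ : ℝ} (hρ : 0 < ρ)
    (h : ∀ u : E2, ‖u‖ = 1 → ρ ≤ supf Ω u - ⟪c, u⟫_ℝ) : ρ ≤ infDist c Ωᶜ := by
  have hball : ball c ρ ⊆ Ω := by
    intro x hxball
    by_contra hx
    obtain ⟨f, hf⟩ := geometric_hahn_banach_open_point hconv hΩ hx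
    have hfne : f ≠ 0 := by
      intro h0
      obtain ⟨a, ha⟩ := hne
      have := hf a ha
      rw [h0] at this
      simp at this
    set v := (InnerProductSpace.toDual ℝ (EuclideanSpace ℝ (Fin 2))).symm f with hv
    have hvne : v ≠ 0 := by
      simp only [hv, ne_eq, AddEquivClass.map_eq_zero_iff]
      exact hfne
    set u := ‖v‖⁻¹ • v with hudef
    have hu : ‖u‖ = 1 := norm_smul_inv_norm hvne
    have hinner : ∀ y : E2, ⟪u, y⟫_ℝ = ‖v‖⁻¹ * f y := by
      intro y
      rw [hudef, real_inner_smul_left, hv, InnerProductSpace.toDual_symm_apply]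
    have hsup : supf Ω u ≤ ⟪u, x⟫_ℝ := by
      refine supf_le hne (fun a ha => ?_)
      rw [hinner, hinner]
      have : (0:ℝ) < ‖v‖⁻¹ := inv_pos.2 (norm_pos_iff.2 hvne)
      nlinarith [hf a ha]
    have h1 := h u hu
    have h2 : ⟪u, x⟫_ℝ - ⟪u, c⟫_ℝ ≤ ‖x - c‖ := by
      have := real_inner_le_norm u (x - c)
      rw [inner_sub_right] at this
      rw [hu] at *
      nlinarith [norm_nonneg (x - c)]
    rw [real_inner_comm u c] at h1
    have h3 : ‖x - c‖ < ρ := by rw [mem_ball, dist_eq_norm] at hxball; exact hxball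
    linarith
  by_contra hlt
  push_neg at hlt
  obtain ⟨y, hy, hdy⟩ := (infDist_lt_iff (compl_nonempty hbdd)).1 hlt
  exact hy (hball (mem_ball'.2 hdy))



def inRadius' (Ω : Set E2) : ℝ := sSup ((fun x => infDist x Ωᶜ) '' Ω)

lemma bddAbove_inr (hbdd : Bornology.IsBounded Ω) :
    BddAbove ((fun x => infDist x Ωᶜ) '' Ω) := by
  obtain ⟨q, hq⟩ := compl_nonempty hbdd
  obtain ⟨M, hM⟩ := hbdd.subset_closedBall 0
  refine ⟨M + ‖q‖, ?_⟩
  rintro - ⟨x, hx, rfl⟩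
  have h1 : ‖x‖ ≤ M := by simpa using hM hx
  calc infDist x Ωᶜ ≤ dist x q := infDist_le_dist_of_mem hq
    _ ≤ ‖x‖ + ‖q‖ := by rw [dist_eq_norm]; exact (norm_sub_le _ _)
    _ ≤ M + ‖q‖ := by linarith

lemma infDist_le_inRadius' (hbdd : Bornology.IsBounded Ω) {c : E2} (hc : c ∈ Ω) :
    infDist c Ωᶜ ≤ inRadius' Ω :=
  le_csSup (bddAbove_inr hbdd) ⟨c, hc, rfl⟩


lemma inRadius'_pos (hΩ : IsOpen Ω) (hbdd : Bornology.IsBounded Ω) (hne : Ω.Nonempty) :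
    0 < inRadius' Ω := by
  obtain ⟨c, hc⟩ := hne
  obtain ⟨ε, hε, hball⟩ := Metric.isOpen_iff.1 hΩ c hc
  have h1 : ε ≤ infDist c Ωᶜ := by
    by_contra hlt
    push_neg at hlt
    obtain ⟨y, hy, hdy⟩ := (infDist_lt_iff (compl_nonempty hbdd)).1 hlt
    exact hy (hball (mem_ball'.2 hdy))
  calc (0:ℝ) < ε := hε
    _ ≤ infDist c Ωᶜ := h1
    _ ≤ inRadius' Ω := infDist_le_inRadius' hbdd hc

lemma infDist_le_inRadius'_all (hΩ : IsOpen Ω) (hbdd : Bornology.IsBounded Ω)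
    (hne : Ω.Nonempty) (c : E2) : infDist c Ωᶜ ≤ inRadius' Ω := by
  by_cases hc : c ∈ Ω
  · exact infDist_le_inRadius' hbdd hc
  · rw [infDist_zero_of_mem (Set.mem_compl hc)]
    exact (inRadius'_pos hΩ hbdd hne).le

lemma exists_maximizer (hΩ : IsOpen Ω) (hbdd : Bornology.IsBounded Ω) (hne : Ω.Nonempty) :
    ∃ c ∈ Ω, infDist c Ωᶜ = inRadius' Ω := by
  have hcomp : IsCompact (closure Ω) :=
    Metric.isCompact_of_isClosed_isBounded isClosed_closure hbdd.closure
  obtain ⟨c, hcmem, hmax⟩ := hcomp.exists_sSup_image_eq hne.closure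
    ((continuous_infDist_pt Ωᶜ).continuousOn)
  have hle : infDist c Ωᶜ ≤ inRadius' Ω := by
    by_cases hc : c ∈ Ω
    · exact infDist_le_inRadius' hbdd hc
    · rw [infDist_zero_of_mem (Set.mem_compl hc)]
      exact (inRadius'_pos hΩ hbdd hne).le
  have hge : inRadius' Ω ≤ infDist c Ωᶜ := by
    rw [← hmax]
    refine csSup_le (hne.image _) ?_
    rintro - ⟨x, hx, rfl⟩
    exact le_csSup ((hcomp.image_of_continuousOn
      (continuous_infDist_pt Ωᶜ).continuousOn).bddAbove) ⟨x, subset_closure hx, rfl⟩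
  have heq : infDist c Ωᶜ = inRadius' Ω := le_antisymm hle hge
  have hcΩ : c ∈ Ω := by
    by_contra hc
    rw [infDist_zero_of_mem (Set.mem_compl hc)] at heq
    exact absurd heq.symm (inRadius'_pos hΩ hbdd hne).ne'
  exact ⟨c, hcΩ, heq⟩



lemma supf_add_le (hbdd : Bornology.IsBounded Ω) (hne : Ω.Nonempty) (u v : E2) :
    supf Ω (u + v) ≤ supf Ω u + supf Ω v := by
  refine supf_le hne (fun x hx => ?_)
  rw [inner_add_left]
  exact add_le_add (le_supf hbdd hx u) (le_supf hbdd hx v)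

lemma supf_le_mul {M : ℝ} (hne : Ω.Nonempty) (hM : Ω ⊆ closedBall 0 M) (v : E2) :
    supf Ω v ≤ ‖v‖ * M := by
  refine supf_le hne (fun x hx => ?_)
  have h1 : ‖x‖ ≤ M := by simpa using hM hx
  calc ⟪v, x⟫_ℝ ≤ ‖v‖ * ‖x‖ := real_inner_le_norm v x
    _ ≤ ‖v‖ * M := by nlinarith [norm_nonneg v, norm_nonneg x]

lemma zero_mem_hull (hΩ : IsOpen Ω) (hconv : Convex ℝ Ω) (hbdd : Bornology.IsBounded Ω)
    (hne : Ω.Nonempty) {c : E2} {r : ℝ} (hc : c ∈ Ω) (hr : 0 < r)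
    (hcr : infDist c Ωᶜ = r) (hmax : ∀ x, infDist x Ωᶜ ≤ r) :
    (0:E2) ∈ closure (convexHull ℝ {u : E2 | ‖u‖ = 1 ∧ supf Ω u - ⟪c, u⟫_ℝ = r}) := by
  set g := fun u : E2 => supf Ω u - ⟪c, u⟫_ℝ with hgdef
  set U := {u : E2 | ‖u‖ = 1 ∧ g u = r} with hUdef
  by_contra h0
  obtain ⟨f, ε, hfε, hfU⟩ := geometric_hahn_banach_point_closed
    ((convex_convexHull ℝ U).closure) isClosed_closure h0
  have hε : 0 < ε := by simpa using hfε
  set d := (InnerProductSpace.toDual ℝ (EuclideanSpace ℝ (Fin 2))).symm f with hd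
  have hdf : ∀ y : E2, ⟪d, y⟫_ℝ = f y := fun y => InnerProductSpace.toDual_symm_apply
  have hU : ∀ b ∈ U, ε < ⟪d, b⟫_ℝ := fun b hb => by
    rw [hdf]; exact hfU b (subset_closure (subset_convexHull ℝ U hb))
  have hgcont : Continuous g :=
    (continuous_supf hbdd hne).sub (continuous_const.inner continuous_id)
  have hglb : ∀ u : E2, ‖u‖ = 1 → r ≤ g u := fun u hu =>
    hcr ▸ infDist_le_gap hbdd hc hu
  have hSne : (sphere (0:E2) 1).Nonempty :=
    ⟨EuclideanSpace.single 0 1, by simp [mem_sphere_zero_iff_norm]⟩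
  set K := sphere (0:E2) 1 ∩ {b : E2 | ⟪d, b⟫_ℝ ≤ ε / 2} with hKdef
  have hKco : IsCompact K := (isCompact_sphere 0 1).inter_right
    (isClosed_le (continuous_const.inner continuous_id) continuous_const)
  have hKne : K.Nonempty := by
    by_contra hKe
    rw [Set.not_nonempty_iff_eq_empty] at hKe
    obtain ⟨s, hs⟩ := hSne
    have hs' : -s ∈ sphere (0:E2) 1 := by
      rw [mem_sphere_zero_iff_norm] at hs ⊢; rw [norm_neg]; exact hs
    have h1 : ¬ (⟪d, s⟫_ℝ ≤ ε/2) := fun h =>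
      (Set.eq_empty_iff_forall_notMem.1 hKe s) ⟨hs, h⟩
    have h2 : ¬ (⟪d, -s⟫_ℝ ≤ ε/2) := fun h =>
      (Set.eq_empty_iff_forall_notMem.1 hKe (-s)) ⟨hs', h⟩
    rw [inner_neg_right] at h2
    push_neg at h1 h2
    linarith
  obtain ⟨uK, hUK, hminK⟩ := hKco.exists_isMinOn hKne hgcont.continuousOn
  set m' := g uK with hm'
  have huK1 : ‖uK‖ = 1 := mem_sphere_zero_iff_norm.1 hUK.1
  have hm'r : r < m' := by
    rcases lt_or_eq_of_le (hglb uK huK1) with h | h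
    · exact h
    · exfalso
      have hmem : uK ∈ U := ⟨huK1, h.symm⟩
      have h1 := hU uK hmem
      have h2 : ⟪d, uK⟫_ℝ ≤ ε / 2 := hUK.2
      linarith
  set δ := m' - r with hδ
  have hδpos : 0 < δ := by rw [hδ]; linarith
  set t := δ / (‖d‖ + 1) with ht
  have hd1 : (0:ℝ) < ‖d‖ + 1 := by positivity
  have htpos : 0 < t := div_pos hδpos hd1
  set κ := min (r + t * (ε/2)) (m' - t * ‖d‖) with hκ
  have hκr : r < κ := by
    refine lt_min (by nlinarith) ?_
    have : t * ‖d‖ < δ := by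
      rw [ht]
      rw [div_mul_eq_mul_div, div_lt_iff₀ hd1]
      nlinarith [norm_nonneg d]
    rw [hδ] at this; linarith
  have key : ∀ u : E2, ‖u‖ = 1 → κ ≤ supf Ω u - ⟪c - t • d, u⟫_ℝ := by
    intro b hb
    have hsplit : supf Ω b - ⟪c - t • d, b⟫_ℝ = g b + t * ⟪d, b⟫_ℝ := by
      rw [hgdef]
      simp only [inner_sub_left, real_inner_smul_left]
      ring
    rw [hsplit]
    by_cases hbK : b ∈ K
    · have h1 : m' ≤ g b := hminK hbK
      have h2 : -‖d‖ ≤ ⟪d, b⟫_ℝ := by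
        have := abs_real_inner_le_norm d b
        rw [hb, mul_one] at this
        cases' abs_le.1 this with h _
        linarith
      have hh := mul_le_mul_of_nonneg_left h2 htpos.le
      have : m' - t * ‖d‖ ≤ g b + t * ⟪d, b⟫_ℝ := by
        have h3 : m' + (-(t * ‖d‖)) ≤ g b + t * ⟪d, b⟫_ℝ := add_le_add h1 (by linarith)
        linarith
      exact le_trans (min_le_right _ _) this
    · have hbS : b ∈ sphere (0:E2) 1 := mem_sphere_zero_iff_norm.2 hb
      have h1 : ε / 2 < ⟪d, b⟫_ℝ := by
        by_contra h
        push_neg at h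
        exact hbK ⟨hbS, h⟩
      have h2 : r ≤ g b := hglb b hb
      have hh := mul_lt_mul_of_pos_left h1 htpos
      have : r + t * (ε/2) ≤ g b + t * ⟪d, b⟫_ℝ := (add_lt_add_of_le_of_lt h2 hh).le
      exact le_trans (min_le_left _ _) this
  have hκinf := gap_le_infDist hΩ hconv hbdd hne (lt_trans hr hκr) key
  have := hmax (c - t • d)
  linarith



set_option maxHeartbeats 1000000 in
lemma exists_approx_direction (hΩ : IsOpen Ω) (hconv : Convex ℝ Ω)
    (hbdd : Bornology.IsBounded Ω) (hne : Ω.Nonempty) {η : ℝ} (hη : 0 < η) :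
    ∃ u : E2, ‖u‖ = 1 ∧ supf Ω u + supf Ω (-u) ≤ 3 * inRadius' Ω + η := by
  classical
  set r := inRadius' Ω with hrdef
  have hr : 0 < r := inRadius'_pos hΩ hbdd hne
  obtain ⟨c, hc, hcr⟩ := exists_maximizer hΩ hbdd hne
  obtain ⟨M, hM0, hM⟩ : ∃ M, 0 ≤ M ∧ Ω ⊆ closedBall 0 M := by
    obtain ⟨M, hM⟩ := hbdd.subset_closedBall 0
    exact ⟨max M 0, le_max_right _ _,
      hM.trans (closedBall_subset_closedBall (le_max_left _ _))⟩
  have h0 := zero_mem_hull hΩ hconv hbdd hne hc hr hcr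
    (infDist_le_inRadius'_all hΩ hbdd hne)
  set U := {u : E2 | ‖u‖ = 1 ∧ supf Ω u - ⟪c, u⟫_ℝ = r} with hUdef
  set E := ‖c‖ + M with hE
  have hE0 : 0 ≤ E := by positivity
  set C := 3 * E + 1 with hC
  have hC0 : 0 < C := by positivity
  set δ := η / C with hδdef
  have hδ : 0 < δ := div_pos hη hC0
  obtain ⟨p, hpU, hpδ⟩ := Metric.mem_closure_iff.1 h0 δ hδ
  have hpnorm : ‖p‖ ≤ δ := by
    rw [dist_comm, dist_zero_right] at hpδ
    exact hpδ.le
  rw [convexHull_eq_union] at hpU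
  simp only [Set.mem_iUnion] at hpU
  obtain ⟨T, hTU, hTai, hpT⟩ := hpU
  obtain ⟨w, hw0, hw1, hwc⟩ := Finset.mem_convexHull.1 hpT
  have hsum : ∑ y ∈ T, w y • y = p := by
    rw [Finset.centerMass_eq_of_sum_1 T id hw1] at hwc
    simpa using hwc
  have hcard : T.card ≤ 3 := by
    have h1 := hTai.card_le_finrank_succ
    have h2 : Module.finrank ℝ
        (vectorSpan ℝ (Set.range (Subtype.val : T → E2))) ≤ 2 := by
      have h3 := Submodule.finrank_le
        (vectorSpan ℝ (Set.range (Subtype.val : T → E2)))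
      rwa [finrank_euclideanSpace_fin] at h3
    rw [Fintype.card_coe] at h1
    omega
  have hTne : T.Nonempty := by
    rcases T.eq_empty_or_nonempty with h | h
    · rw [h] at hw1; simp at hw1
    · exact h
  obtain ⟨u₀, hu₀T, hu₀w⟩ :=
    Finset.exists_le_of_sum_le (f := fun _ => (1:ℝ)/3) (g := w) hTne (by
      rw [hw1, Finset.sum_const]
      have : (T.card : ℝ) ≤ 3 := by exact_mod_cast hcard
      rw [nsmul_eq_mul]
      linarith)
  set lam := w u₀ with hlam_def
  have hlam : 1/3 ≤ lam := hu₀w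
  have hlam0 : 0 < lam := lt_of_lt_of_le (by norm_num) hlam
  have hu₀U : u₀ ∈ U := hTU hu₀T
  have hu₀1 : ‖u₀‖ = 1 := hu₀U.1
  have hgu₀ : supf Ω u₀ - ⟪c, u₀⟫_ℝ = r := hu₀U.2
  have herase : ∑ y ∈ T.erase u₀, w y • y = p - lam • u₀ := by
    have := Finset.sum_erase_add T (fun y => w y • y) hu₀T
    rw [hsum] at this
    have h4 : ∑ y ∈ T.erase u₀, w y • y + lam • u₀ = p := this
    linear_combination (norm := module) h4
  have hwsum_erase : ∑ y ∈ T.erase u₀, w y = 1 - lam := by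
    have := Finset.sum_erase_add T w hu₀T
    rw [hw1] at this
    linarith
  -- main estimate
  have hb1 : lam * supf Ω (-u₀) ≤ (∑ y ∈ T.erase u₀, w y * supf Ω y) + supf Ω (-p) := by
    rw [← supf_smul hbdd hne hlam0]
    have heq : lam • (-u₀) = (∑ y ∈ T.erase u₀, w y • y) + (-p) := by
      rw [herase]
      module
    rw [heq]
    exact (supf_add_le hbdd hne _ _).trans
      (add_le_add_left (supf_sum_le hbdd hne _ _
        (fun y hy => hw0 y (Finset.mem_of_mem_erase hy))) _)
  have hb2 : ∑ y ∈ T.erase u₀, w y * supf Ω y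
      = (1 - lam) * r + ⟪c, p⟫_ℝ - lam * ⟪c, u₀⟫_ℝ := by
    have hsupfy : ∀ y ∈ T.erase u₀, w y * supf Ω y = w y * r + w y * ⟪c, y⟫_ℝ := by
      intro y hy
      have hyU : y ∈ U := hTU (Finset.mem_of_mem_erase hy)
      have := hyU.2
      have : supf Ω y = r + ⟪c, y⟫_ℝ := by linarith
      rw [this]; ring
    rw [Finset.sum_congr rfl hsupfy, Finset.sum_add_distrib, ← Finset.sum_mul, hwsum_erase]
    have hip : ∑ y ∈ T.erase u₀, w y * ⟪c, y⟫_ℝ = ⟪c, p⟫_ℝ - lam * ⟪c, u₀⟫_ℝ := by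
      have h5 : ∑ y ∈ T.erase u₀, w y * ⟪c, y⟫_ℝ = ⟪c, ∑ y ∈ T.erase u₀, w y • y⟫_ℝ := by
        rw [inner_sum]
        refine Finset.sum_congr rfl (fun y hy => ?_)
        rw [real_inner_smul_right]
      rw [h5, herase, inner_sub_right, real_inner_smul_right]
    rw [hip]; ring
  have hb3 : supf Ω (-p) ≤ δ * M := by
    have := supf_le_mul hne hM (-p)
    rw [norm_neg] at this
    nlinarith
  have hb4 : ⟪c, p⟫_ℝ ≤ ‖c‖ * δ := by
    have h6 := real_inner_le_norm c p
    nlinarith [norm_nonneg c]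
  -- combine
  have hmain : lam * (supf Ω (-u₀) + ⟪c, u₀⟫_ℝ) ≤ (1 - lam) * r + E * δ := by
    have hexp : lam * (supf Ω (-u₀) + ⟪c, u₀⟫_ℝ)
        = lam * supf Ω (-u₀) + lam * ⟪c, u₀⟫_ℝ := by ring
    have hEδ : E * δ = ‖c‖ * δ + δ * M := by rw [hE]; ring
    rw [hexp, hEδ]
    linarith [hb1, hb2.le, hb2.ge, hb3, hb4]
  have hP : 0 ≤ E * δ := mul_nonneg hE0 hδ.le
  have h31 : 0 ≤ 3 * lam - 1 := by linarith
  have hq1 : (1 - lam) * r ≤ 2 * lam * r := by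
    have h9 : 2 * lam * r - (1 - lam) * r = (3 * lam - 1) * r := by ring
    linarith [mul_nonneg h31 hr.le, h9.le, h9.ge]
  have hq2 : E * δ ≤ 3 * lam * (E * δ) := by
    have h9 : 3 * lam * (E * δ) - E * δ = (3 * lam - 1) * (E * δ) := by ring
    linarith [mul_nonneg h31 hP, h9.le, h9.ge]
  have hq3 : lam * (supf Ω (-u₀) + ⟪c, u₀⟫_ℝ) ≤ lam * (2 * r + 3 * (E * δ)) := by
    have h7 : lam * (supf Ω (-u₀) + ⟪c, u₀⟫_ℝ) ≤ 2 * lam * r + 3 * lam * (E * δ) := by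
      linarith
    have h8 : 2 * lam * r + 3 * lam * (E * δ) = lam * (2 * r + 3 * (E * δ)) := by ring
    linarith
  have hX : supf Ω (-u₀) + ⟪c, u₀⟫_ℝ ≤ 2 * r + 3 * (E * δ) :=
    le_of_mul_le_mul_left hq3 hlam0
  refine ⟨u₀, hu₀1, ?_⟩
  have hfin : 3 * (E * δ) ≤ η := by
    have h10 : C * δ = η := by
      rw [hδdef]
      field_simp
    have h11 : 3 * (E * δ) = C * δ - δ := by rw [hC]; ring
    linarith [hδ.le]
  linarith [hgu₀, hX, hfin]





def vec2 (a b : ℝ) : E2 := (EuclideanSpace.equiv (Fin 2) ℝ).symm ![a, b]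

lemma vec2_apply0 (a b : ℝ) : vec2 a b 0 = a := rfl

lemma vec2_apply1 (a b : ℝ) : vec2 a b 1 = b := rfl

lemma inner_vec2 (a b : ℝ) (x : E2) : ⟪vec2 a b, x⟫_ℝ = a * x 0 + b * x 1 := by
  rw [PiLp.inner_apply, Fin.sum_univ_two]
  simp [vec2_apply0, vec2_apply1, RCLike.inner_apply]
  ring

lemma vec2_norm {a b : ℝ} (h : a ^ 2 + b ^ 2 = 1) : ‖vec2 a b‖ = 1 := by
  rw [EuclideanSpace.norm_eq, Fin.sum_univ_two, vec2_apply0, vec2_apply1]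
  rw [Real.norm_eq_abs, Real.norm_eq_abs, sq_abs, sq_abs, h, Real.sqrt_one]

lemma rot_apply1 (x₀ : E2) (θ : ℝ) (x : E2) :
    (rot x₀ θ x) 1 = ⟪vec2 (Real.sin θ) (Real.cos θ), x⟫_ℝ
      + (x₀ 1 - Real.sin θ * x₀ 0 - Real.cos θ * x₀ 1) := by
  rw [inner_vec2]
  show x₀ 1 + Real.sin θ * (x 0 - x₀ 0) + Real.cos θ * (x 1 - x₀ 1) = _
  ring

lemma bddAbove_affine (hbdd : Bornology.IsBounded Ω) (u : E2) (C : ℝ) :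
    BddAbove ((fun x => ⟪u, x⟫_ℝ + C) '' Ω) := by
  obtain ⟨bb, hb⟩ := bddAbove_supf hbdd u
  refine ⟨bb + C, ?_⟩
  rintro - ⟨x, hx, rfl⟩
  exact add_le_add_left (hb ⟨x, hx, rfl⟩) C

lemma sSup_affine_image (hbdd : Bornology.IsBounded Ω) (hne : Ω.Nonempty) (u : E2) (C : ℝ) :
    sSup ((fun x => ⟪u, x⟫_ℝ + C) '' Ω) = supf Ω u + C := by
  apply le_antisymm
  · refine csSup_le (hne.image _) ?_
    rintro - ⟨x, hx, rfl⟩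
    exact add_le_add_left (le_supf hbdd hx u) C
  · have h1 : supf Ω u ≤ sSup ((fun x => ⟪u, x⟫_ℝ + C) '' Ω) - C := by
      refine supf_le hne (fun x hx => ?_)
      have h2 := le_csSup (bddAbove_affine hbdd u C) ⟨x, hx, rfl⟩
      have h2' : ⟪u, x⟫_ℝ + C ≤ sSup ((fun x => ⟪u, x⟫_ℝ + C) '' Ω) := h2
      linarith
    linarith

lemma sInf_affine_image (hbdd : Bornology.IsBounded Ω) (hne : Ω.Nonempty) (u : E2) (C : ℝ) :
    sInf ((fun x => ⟪u, x⟫_ℝ + C) '' Ω) = C - supf Ω (-u) := by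
  rw [Real.sInf_def]
  have h1 : -((fun x => ⟪u, x⟫_ℝ + C) '' Ω) = (fun x => ⟪-u, x⟫_ℝ + (-C)) '' Ω := by
    rw [← Set.image_neg_eq_neg, Set.image_image]
    refine Set.image_congr (fun x _ => ?_)
    rw [inner_neg_left]
    ring
  rw [h1, sSup_affine_image hbdd hne (-u) (-C)]
  ring

lemma width_eq (hbdd : Bornology.IsBounded Ω) (hne : Ω.Nonempty) (x₀ : E2) (θ : ℝ) :
    width Ω x₀ θ = supf Ω (vec2 (Real.sin θ) (Real.cos θ))
      + supf Ω (-vec2 (Real.sin θ) (Real.cos θ)) := by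
  set u := vec2 (Real.sin θ) (Real.cos θ) with hu
  set C := x₀ 1 - Real.sin θ * x₀ 0 - Real.cos θ * x₀ 1 with hC
  have himg : (fun x : E2 => x 1) '' (rot x₀ θ '' Ω) = (fun x => ⟪u, x⟫_ℝ + C) '' Ω := by
    rw [Set.image_image]
    exact Set.image_congr (fun x _ => rot_apply1 x₀ θ x)
  rw [width, himg, sSup_affine_image hbdd hne, sInf_affine_image hbdd hne]
  ring

lemma exists_theta {u : E2} (hu : ‖u‖ = 1) :
    ∃ θ ∈ Set.Ico 0 (2 * Real.pi), u = vec2 (Real.sin θ) (Real.cos θ) := by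
  have hsum : u 0 ^ 2 + u 1 ^ 2 = 1 := by
    have h1 := EuclideanSpace.norm_eq u
    rw [hu] at h1
    have h2 : √(∑ i, ‖u i‖ ^ 2) = 1 := h1.symm
    rw [Real.sqrt_eq_one] at h2
    rw [Fin.sum_univ_two, Real.norm_eq_abs, Real.norm_eq_abs, sq_abs, sq_abs] at h2
    exact h2
  set z : ℂ := ⟨u 1, u 0⟩ with hz
  have hre : z.re = u 1 := rfl
  have him : z.im = u 0 := rfl
  have habs2 : ‖z‖ ^ 2 = 1 := by
    rw [Complex.sq_norm, Complex.normSq_apply, hre, him]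
    nlinarith [hsum]
  have habs : ‖z‖ = 1 := by
    have h3 : (‖z‖ - 1) * (‖z‖ + 1) = 0 := by nlinarith
    rcases mul_eq_zero.1 h3 with h | h
    · linarith
    · have := norm_nonneg z
      linarith
  have hz0 : z ≠ 0 := by
    intro h
    rw [h] at habs
    simp at habs
  have hcos : Real.cos z.arg = u 1 := by
    rw [Complex.cos_arg hz0, habs, hre, div_one]
  have hsin : Real.sin z.arg = u 0 := by
    rw [Complex.sin_arg, habs, him, div_one]
  have harg := Complex.arg_mem_Ioc z
  have hpi := Real.pi_pos
  have hext : ∀ φ : ℝ, Real.sin φ = u 0 → Real.cos φ = u 1 →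
      u = vec2 (Real.sin φ) (Real.cos φ) := by
    intro φ h1 h2
    ext i
    fin_cases i
    · show u 0 = vec2 (Real.sin φ) (Real.cos φ) 0
      rw [vec2_apply0, h1]
    · show u 1 = vec2 (Real.sin φ) (Real.cos φ) 1
      rw [vec2_apply1, h2]
  by_cases h : 0 ≤ z.arg
  · exact ⟨z.arg, ⟨h, by linarith [harg.2]⟩, hext z.arg hsin hcos⟩
  · push_neg at h
    refine ⟨z.arg + 2 * Real.pi, ⟨by linarith [harg.1], by linarith⟩, ?_⟩
    rw [Real.sin_add_two_pi, Real.cos_add_two_pi]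
    exact hext _ hsin hcos

lemma two_le_width (hbdd : Bornology.IsBounded Ω) (hne : Ω.Nonempty) (x₀ : E2) (θ : ℝ) :
    2 * inRadius' Ω ≤ width Ω x₀ θ := by
  rw [width_eq hbdd hne]
  set u := vec2 (Real.sin θ) (Real.cos θ) with hudef
  have hu : ‖u‖ = 1 := vec2_norm (Real.sin_sq_add_cos_sq θ)
  have hnu : ‖-u‖ = 1 := by rw [norm_neg]; exact hu
  have h1 : inRadius' Ω ≤ (supf Ω u + supf Ω (-u)) / 2 := by
    refine csSup_le (hne.image _) ?_
    rintro - ⟨x, hx, rfl⟩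
    have ha := infDist_le_gap hbdd hx hu
    have hb := infDist_le_gap hbdd hx hnu
    rw [inner_neg_right] at hb
    linarith
  linarith


theorem stmt_3 (Ω : Set (EuclideanSpace ℝ (Fin 2))) (hΩ : IsOpen Ω)
    (hbdd : Bornology.IsBounded Ω) (hconv : Convex ℝ Ω) (hne : Ω.Nonempty)
    (x₀ : EuclideanSpace ℝ (Fin 2)) (hx₀ : x₀ ∈ Ω) :
    2 * inRadius Ω ≤ minWidth Ω x₀ ∧ minWidth Ω x₀ ≤ 3 * inRadius Ω := by
  have hIR : inRadius Ω = inRadius' Ω := rfl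
  have hlow : ∀ θ : ℝ, 2 * inRadius Ω ≤ width Ω x₀ θ := fun θ => by
    rw [hIR]; exact two_le_width hbdd hne x₀ θ
  have h2pi := Real.two_pi_pos
  constructor
  · refine le_csInf ⟨width Ω x₀ 0, ⟨0, ⟨le_refl 0, h2pi⟩, rfl⟩⟩ ?_
    rintro b ⟨θ, hθ, rfl⟩
    exact hlow θ
  · refine le_of_forall_pos_le_add (fun η hη => ?_)
    obtain ⟨u, hu1, hule⟩ := exists_approx_direction hΩ hconv hbdd hne hη
    obtain ⟨θ, hθ, hueq⟩ := exists_theta hu1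
    have hw : width Ω x₀ θ = supf Ω u + supf Ω (-u) := by
      rw [width_eq hbdd hne x₀ θ, ← hueq]
    have hbb : BddBelow ((fun θ => width Ω x₀ θ) '' Set.Ico 0 (2 * Real.pi)) := by
      refine ⟨2 * inRadius Ω, ?_⟩
      rintro - ⟨θ', hθ', rfl⟩
      exact hlow θ'
    calc minWidth Ω x₀ ≤ width Ω x₀ θ := csInf_le hbb ⟨θ, hθ, rfl⟩
      _ = supf Ω u + supf Ω (-u) := hw
      _ ≤ 3 * inRadius' Ω + η := hule
      _ = 3 * inRadius Ω + η := by rw [hIR]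

end
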